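/- Comparison of fractional mean curvatures: let E ⊆ F ⊆ ℝⁿ and x₀ ∈ ∂E ∩ ∂F. Then for every ρ > 0, I_s^ρ[E](x₀) ≥ I_s^ρ[F](x₀). Moreover, if liminf_{ρ→0⁺} I_s^ρ[F](x₀) ≥ a and limsup_{ρ→0⁺} I_s^ρ[E](x₀) ≤ a for some a ∈ ℝ, then E = F (up to measure zero), the principal values exist, and I_s[E](x₀) = a. -/

import Mathlib

open MeasureTheory Filter Metric Topology
open scoped symmDiff

/-- The truncated `s`-fractional mean curvature
`I_s^ρ[E](q) = ∫_{ℝⁿ \ B_ρ(q)} (χ_{ℝⁿ\E}(y) − χ_E(y))/|y − q|^{n+s} dy`. -/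
noncomputable def fracCurvTrunc (n : ℕ) (s : ℝ) (E : Set (EuclideanSpace ℝ (Fin n)))
    (q : EuclideanSpace ℝ (Fin n)) (ρ : ℝ) : ℝ :=
  ∫ y in (ball q ρ)ᶜ,
    (Eᶜ.indicator (fun _ => (1 : ℝ)) y - E.indicator (fun _ => (1 : ℝ)) y) /
      ‖y - q‖ ^ ((n : ℝ) + s)

/-- The function `y ↦ ‖y - x₀‖ ^ (-r)` is integrable off any ball around `x₀`, when `n < r`. -/
lemma fracCurv_majorant_integrableOn {n : ℕ} {r : ℝ} (hnr : (n : ℝ) < r)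
    (x₀ : EuclideanSpace ℝ (Fin n)) {ρ : ℝ} (hρ : 0 < ρ) :
    IntegrableOn (fun y : EuclideanSpace ℝ (Fin n) => ‖y - x₀‖ ^ (-r)) (ball x₀ ρ)ᶜ volume := by
  have hr0 : 0 < r := lt_of_le_of_lt (Nat.cast_nonneg n) hnr
  have hnr' : (Module.finrank ℝ (EuclideanSpace ℝ (Fin n)) : ℝ) < r := by
    rwa [finrank_euclideanSpace_fin]
  have hc : (0 : ℝ) < 1 + 1 / ρ := by positivity
  have hint : Integrable
      (fun y : EuclideanSpace ℝ (Fin n) => (1 + 1 / ρ) ^ r * (1 + ‖y - x₀‖) ^ (-r)) volume :=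
    ((integrable_one_add_norm hnr').comp_sub_right x₀).const_mul _
  refine Integrable.mono' hint.integrableOn ?_ ?_
  · exact (Measurable.aestronglyMeasurable (by fun_prop))
  · rw [ae_restrict_iff' measurableSet_ball.compl]
    refine Eventually.of_forall fun y hy => ?_
    have hz : ρ ≤ ‖y - x₀‖ := by
      have := hy
      rw [Set.mem_compl_iff, mem_ball, not_lt, dist_eq_norm] at this
      exact this
    set z : ℝ := ‖y - x₀‖ with hzdef
    have hz0 : 0 < z := lt_of_lt_of_le hρ hz
    rw [Real.norm_eq_abs, abs_of_nonneg (Real.rpow_nonneg hz0.le _)]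
    have hquot : (1 + z) / (1 + 1 / ρ) ≤ z := by
      rw [div_le_iff₀ hc]
      have h1 : (1 : ℝ) ≤ z / ρ := (one_le_div hρ).2 hz
      calc 1 + z ≤ z / ρ + z := by linarith
        _ = z * (1 + 1 / ρ) := by ring
    have hstep : z ^ (-r) ≤ ((1 + z) / (1 + 1 / ρ)) ^ (-r) :=
      Real.rpow_le_rpow_of_nonpos (by positivity) hquot (by linarith)
    refine hstep.trans (le_of_eq ?_)
    rw [Real.div_rpow (by positivity) hc.le, Real.rpow_neg hc.le, div_eq_mul_inv, inv_inv,
      mul_comm]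

/-- Integrability off a ball of a bounded measurable function divided by `‖y - x₀‖ ^ r`. -/
lemma fracCurv_div_integrableOn {n : ℕ} {r c : ℝ} (hnr : (n : ℝ) < r)
    (x₀ : EuclideanSpace ℝ (Fin n)) {ρ : ℝ} (hρ : 0 < ρ)
    {g : EuclideanSpace ℝ (Fin n) → ℝ} (hg : Measurable g) (hgc : ∀ y, |g y| ≤ c) :
    IntegrableOn (fun y => g y / ‖y - x₀‖ ^ r) (ball x₀ ρ)ᶜ volume := by
  refine Integrable.mono' (((fracCurv_majorant_integrableOn hnr x₀ hρ).const_mul c)) ?_ ?_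
  · exact Measurable.aestronglyMeasurable (by fun_prop)
  · rw [ae_restrict_iff' measurableSet_ball.compl]
    refine Eventually.of_forall fun y hy => ?_
    have hz : ρ ≤ ‖y - x₀‖ := by
      have := hy
      rw [Set.mem_compl_iff, mem_ball, not_lt, dist_eq_norm] at this
      exact this
    have hz0 : 0 < ‖y - x₀‖ := lt_of_lt_of_le hρ hz
    have hd : 0 < ‖y - x₀‖ ^ r := Real.rpow_pos_of_pos hz0 r
    rw [Real.norm_eq_abs, abs_div, abs_of_nonneg hd.le, Real.rpow_neg hz0.le,
      ← div_eq_mul_inv]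
    gcongr
    exact hgc y

/-- Comparison of fractional mean curvatures: if `E ⊆ F` and `x₀ ∈ ∂E ∩ ∂F`, then
`I_s^ρ[E](x₀) ≥ I_s^ρ[F](x₀)` for every `ρ > 0`. Moreover, if
`liminf_{ρ→0⁺} I_s^ρ[F](x₀) ≥ a` and `limsup_{ρ→0⁺} I_s^ρ[E](x₀) ≤ a`, then `E = F` up to
measure zero, the principal values exist and both equal `a`. -/
theorem fracCurv_comparison (n : ℕ) (s : ℝ) (hs : s ∈ Set.Ioo (0 : ℝ) 1)
    (E F : Set (EuclideanSpace ℝ (Fin n))) (hE : MeasurableSet E) (hF : MeasurableSet F)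
    (hEF : E ⊆ F) (x₀ : EuclideanSpace ℝ (Fin n))
    (hx : x₀ ∈ frontier E ∩ frontier F) :
    (∀ ρ > (0 : ℝ), fracCurvTrunc n s F x₀ ρ ≤ fracCurvTrunc n s E x₀ ρ) ∧
      ∀ a : ℝ,
        (∀ ε > (0 : ℝ), ∀ᶠ ρ in 𝓝[>] (0 : ℝ), a - ε < fracCurvTrunc n s F x₀ ρ) →
        (∀ ε > (0 : ℝ), ∀ᶠ ρ in 𝓝[>] (0 : ℝ), fracCurvTrunc n s E x₀ ρ < a + ε) →
        volume (E ∆ F) = 0 ∧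
          Tendsto (fracCurvTrunc n s E x₀) (𝓝[>] (0 : ℝ)) (𝓝 a) ∧
          Tendsto (fracCurvTrunc n s F x₀) (𝓝[>] (0 : ℝ)) (𝓝 a) := by
  obtain ⟨hs0, hs1⟩ := hs
  set r : ℝ := (n : ℝ) + s with hr_def
  have hnr : (n : ℝ) < r := by simp [hr_def, hs0]
  -- the two integrands
  set fE : EuclideanSpace ℝ (Fin n) → ℝ := fun y =>
    (Eᶜ.indicator (fun _ => (1 : ℝ)) y - E.indicator (fun _ => (1 : ℝ)) y) / ‖y - x₀‖ ^ r
    with hfE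
  set fF : EuclideanSpace ℝ (Fin n) → ℝ := fun y =>
    (Fᶜ.indicator (fun _ => (1 : ℝ)) y - F.indicator (fun _ => (1 : ℝ)) y) / ‖y - x₀‖ ^ r
    with hfF
  have hIE : ∀ ρ, fracCurvTrunc n s E x₀ ρ = ∫ y in (ball x₀ ρ)ᶜ, fE y := fun ρ => rfl
  have hIF : ∀ ρ, fracCurvTrunc n s F x₀ ρ = ∫ y in (ball x₀ ρ)ᶜ, fF y := fun ρ => rfl
  have hnumbd : ∀ (A : Set (EuclideanSpace ℝ (Fin n))) (y),
      |Aᶜ.indicator (fun _ => (1 : ℝ)) y - A.indicator (fun _ => (1 : ℝ)) y| ≤ 1 := by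
    intro A y
    by_cases hy : y ∈ A <;> simp [Set.indicator_apply, hy]
  have hintE : ∀ {ρ : ℝ}, 0 < ρ → IntegrableOn fE (ball x₀ ρ)ᶜ volume := fun hρ =>
    fracCurv_div_integrableOn hnr x₀ hρ
      ((measurable_const.indicator hE.compl).sub (measurable_const.indicator hE)) (hnumbd E)
  have hintF : ∀ {ρ : ℝ}, 0 < ρ → IntegrableOn fF (ball x₀ ρ)ᶜ volume := fun hρ =>
    fracCurv_div_integrableOn hnr x₀ hρ
      ((measurable_const.indicator hF.compl).sub (measurable_const.indicator hF)) (hnumbd F)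
  -- Part 1: comparison for each ρ > 0
  have part1 : ∀ ρ > (0 : ℝ), fracCurvTrunc n s F x₀ ρ ≤ fracCurvTrunc n s E x₀ ρ := by
    intro ρ hρ
    rw [hIE, hIF]
    refine setIntegral_mono_on (hintF hρ) (hintE hρ) measurableSet_ball.compl fun y hy => ?_
    have hz : ρ ≤ ‖y - x₀‖ := by
      have := hy
      rw [Set.mem_compl_iff, mem_ball, not_lt, dist_eq_norm] at this
      exact this
    have hd : 0 < ‖y - x₀‖ ^ r := Real.rpow_pos_of_pos (lt_of_lt_of_le hρ hz) r
    have hnum : Fᶜ.indicator (fun _ => (1 : ℝ)) y - F.indicator (fun _ => (1 : ℝ)) y ≤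
        Eᶜ.indicator (fun _ => (1 : ℝ)) y - E.indicator (fun _ => (1 : ℝ)) y := by
      by_cases hyE : y ∈ E
      · have hyF : y ∈ F := hEF hyE
        simp [Set.indicator_apply, hyE, hyF]
      · by_cases hyF : y ∈ F <;> simp [Set.indicator_apply, hyE, hyF]
    exact div_le_div_of_nonneg_right hnum hd.le
  refine ⟨part1, ?_⟩
  intro a haF haE
  -- the difference integrand
  set φ : EuclideanSpace ℝ (Fin n) → ℝ := fun y =>
    (F \ E).indicator (fun _ => (2 : ℝ)) y / ‖y - x₀‖ ^ r with hφ
  have hφ_nonneg : ∀ y, 0 ≤ φ y := fun y =>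
    div_nonneg (Set.indicator_nonneg (fun _ _ => by norm_num) y)
      (Real.rpow_nonneg (norm_nonneg _) _)
  have hφ_meas : Measurable φ := by
    have : Measurable ((F \ E).indicator (fun _ => (2 : ℝ))) :=
      measurable_const.indicator (hF.diff hE)
    fun_prop
  have hφ_int : ∀ {ρ : ℝ}, 0 < ρ → IntegrableOn φ (ball x₀ ρ)ᶜ volume := by
    intro ρ hρ
    refine fracCurv_div_integrableOn (c := 2) hnr x₀ hρ
      (measurable_const.indicator (hF.diff hE)) fun y => ?_
    by_cases hy : y ∈ F \ E <;> simp [Set.indicator_apply, hy]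
  have hφ_eq : ∀ y, fE y - fF y = φ y := by
    intro y
    rw [hfE, hfF, hφ, div_sub_div_same]
    congr 1
    by_cases hyE : y ∈ E
    · have hyF : y ∈ F := hEF hyE
      simp [Set.indicator_apply, hyE, hyF]
    · by_cases hyF : y ∈ F <;> simp [Set.indicator_apply, hyE, hyF] <;> norm_num
  have hdiff : ∀ {ρ : ℝ}, 0 < ρ →
      fracCurvTrunc n s E x₀ ρ - fracCurvTrunc n s F x₀ ρ = ∫ y in (ball x₀ ρ)ᶜ, φ y := by
    intro ρ hρ
    rw [hIE, hIF, ← integral_sub (hintE hρ) (hintF hρ)]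
    exact integral_congr_ae (Eventually.of_forall fun y => hφ_eq y)
  -- For each ρ > 0, the part of F \ E outside the ball is null
  have key : ∀ ρ > (0 : ℝ), volume ((F \ E) \ ball x₀ ρ) = 0 := by
    intro ρ hρ
    have hJ_nonneg : 0 ≤ ∫ y in (ball x₀ ρ)ᶜ, φ y :=
      setIntegral_nonneg measurableSet_ball.compl fun y _ => hφ_nonneg y
    have hJ_small : ∀ ε > (0 : ℝ), (∫ y in (ball x₀ ρ)ᶜ, φ y) < 2 * ε := by
      intro ε hε
      have hIoo : Set.Ioo (0 : ℝ) ρ ∈ 𝓝[>] (0 : ℝ) :=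
        Ioo_mem_nhdsGT_of_mem ⟨le_refl _, hρ⟩
      obtain ⟨ρ', h1, h2, h3⟩ :=
        ((haF ε hε).and ((haE ε hε).and (Filter.eventually_of_mem hIoo fun x hx => hx))).exists
      have hρ'0 : 0 < ρ' := h3.1
      have hmono : (∫ y in (ball x₀ ρ)ᶜ, φ y) ≤ ∫ y in (ball x₀ ρ')ᶜ, φ y := by
        refine setIntegral_mono_set (hφ_int hρ'0)
          (Eventually.of_forall fun y => hφ_nonneg y) (Eventually.of_forall ?_)
        exact Set.compl_subset_compl.2 (ball_subset_ball h3.2.le)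
      calc (∫ y in (ball x₀ ρ)ᶜ, φ y) ≤ ∫ y in (ball x₀ ρ')ᶜ, φ y := hmono
        _ = fracCurvTrunc n s E x₀ ρ' - fracCurvTrunc n s F x₀ ρ' := (hdiff hρ'0).symm
        _ < (a + ε) - (a - ε) := sub_lt_sub h2 h1
        _ = 2 * ε := by ring
    have hJ0 : (∫ y in (ball x₀ ρ)ᶜ, φ y) = 0 := by
      refine le_antisymm ?_ hJ_nonneg
      by_contra h
      push_neg at h
      have := hJ_small ((∫ y in (ball x₀ ρ)ᶜ, φ y) / 2) (by linarith)
      linarith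
    have hae : φ =ᵐ[volume.restrict (ball x₀ ρ)ᶜ] 0 :=
      (integral_eq_zero_iff_of_nonneg_ae (Eventually.of_forall hφ_nonneg)
        (hφ_int hρ)).1 hJ0
    rw [EventuallyEq, ae_iff] at hae
    rw [Measure.restrict_apply' measurableSet_ball.compl] at hae
    refine measure_mono_null ?_ hae
    intro y hy
    obtain ⟨hyFE, hyball⟩ := hy
    refine ⟨?_, hyball⟩
    have hz : ρ ≤ ‖y - x₀‖ := by
      have := hyball
      rw [mem_ball, not_lt, dist_eq_norm] at this
      exact this
    have hd : 0 < ‖y - x₀‖ ^ r := Real.rpow_pos_of_pos (lt_of_lt_of_le hρ hz) r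
    have : φ y = 2 / ‖y - x₀‖ ^ r := by
      rw [hφ]
      simp [Set.indicator_apply, hyFE]
    simp only [Set.mem_setOf_eq, Pi.zero_apply]
    rw [this]
    positivity
  -- n must be positive, since x₀ ∈ frontier E
  have hnontriv : Nontrivial (EuclideanSpace ℝ (Fin n)) := by
    rcases Nat.eq_zero_or_pos n with h0 | h1
    · exfalso
      subst h0
      have hsub : Subsingleton (EuclideanSpace ℝ (Fin 0)) := by infer_instance
      have hxE := hx.1
      by_cases hmem : x₀ ∈ E
      · have hEu : E = Set.univ :=
          Set.eq_univ_of_forall fun y => by rwa [Subsingleton.elim y x₀]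
        rw [hEu, frontier_univ] at hxE
        exact hxE
      · have hEe : E = (∅ : Set _) :=
          Set.eq_empty_iff_forall_notMem.2 fun y hy =>
            hmem (by rwa [Subsingleton.elim y x₀] at hy)
        rw [hEe, frontier_empty] at hxE
        exact hxE
    · have : 0 < Module.finrank ℝ (EuclideanSpace ℝ (Fin n)) := by
        rw [finrank_euclideanSpace_fin]; exact h1
      exact Module.nontrivial_of_finrank_pos this
  haveI := hnontriv
  have hFE0 : volume (F \ E) = 0 := by
    have hsubset : F \ E ⊆ {x₀} ∪ ⋃ k : ℕ, ((F \ E) \ ball x₀ (1 / ((k : ℝ) + 1))) := by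
      intro y hy
      by_cases h : y = x₀
      · exact Or.inl (by simp [h])
      · have hd : 0 < dist y x₀ := dist_pos.2 h
        obtain ⟨k, hk⟩ := exists_nat_one_div_lt hd
        refine Or.inr (Set.mem_iUnion.2 ⟨k, hy, fun hball => ?_⟩)
        rw [mem_ball] at hball
        linarith
    refine measure_mono_null hsubset ?_
    have h1 : volume ({x₀} : Set (EuclideanSpace ℝ (Fin n))) = 0 := measure_singleton x₀
    have h2 : volume (⋃ k : ℕ, ((F \ E) \ ball x₀ (1 / ((k : ℝ) + 1)))) = 0 :=
      measure_iUnion_null fun k => key _ (by positivity)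
    exact le_antisymm ((measure_union_le _ _).trans (by rw [h1, h2]; simp)) zero_le
  have hsymm : volume (E ∆ F) = 0 := by
    have : E ∆ F = (E \ F) ∪ (F \ E) := symmDiff_def E F
    rw [this, Set.diff_eq_empty.2 hEF, Set.empty_union]
    exact hFE0
  -- the two truncated curvatures agree for every radius
  have haeEq : ∀ ρ : ℝ, fracCurvTrunc n s E x₀ ρ = fracCurvTrunc n s F x₀ ρ := by
    intro ρ
    rw [hIE, hIF]
    refine integral_congr_ae (ae_restrict_of_ae ?_)
    have hao : ∀ᵐ y, y ∉ F \ E := by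
      rw [ae_iff]
      simp only [not_not]
      exact hFE0
    filter_upwards [hao] with y hy
    rw [hfE, hfF]
    congr 1
    by_cases hyE : y ∈ E
    · have hyF : y ∈ F := hEF hyE
      simp [Set.indicator_apply, hyE, hyF]
    · have hyF : y ∉ F := fun hF' => hy ⟨hF', hyE⟩
      simp [Set.indicator_apply, hyE, hyF]
  have hTendE : Tendsto (fracCurvTrunc n s E x₀) (𝓝[>] (0 : ℝ)) (𝓝 a) := by
    rw [Metric.tendsto_nhds]
    intro ε hε
    filter_upwards [haE ε hε, haF ε hε] with ρ h1 h2
    have h3 := haeEq ρ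
    rw [Real.dist_eq, abs_sub_lt_iff]
    constructor <;> linarith
  exact ⟨hsymm, hTendE, hTendE.congr haeEq⟩
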